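/- Let χ₄ be the nontrivial Dirichlet character modulo 4 (χ₄(c) = 1 if c ≡ 1 mod 4, −1 if c ≡ 3 mod 4, 0 if c even). Under the hypotheses r² + s² − bc = d·p^{2j} with p odd: if d is even then χ₄(−2(r+s)+2b+c) = χ₄(c), and if d is odd then χ₄(−2(r+s)+2b+c) = −χ₄(c) whenever c is odd; and −2(r+s)+2b+c is even iff c is even. -/
import Mathlib


/-- The odd Dirichlet character modulo 4: `χ₄(c) = 1` if `c ≡ 1 (mod 4)`, `−1` if
`c ≡ 3 (mod 4)`, and `0` if `c` is even. -/
def chiFour (c : ℤ) : ℤ :=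
  if c % 4 = 1 then 1 else if c % 4 = 3 then -1 else 0

/-- Under the hypotheses `r² + s² − bc = d·p^(2j)` with `p` odd: if `d` is even then
`χ₄(−2(r+s)+2b+c) = χ₄(c)`; if `d` is odd and `c` is odd then
`χ₄(−2(r+s)+2b+c) = −χ₄(c)`; and `−2(r+s)+2b+c` is even iff `c` is even. -/
theorem chiFour_of_c_prime
    (d p j : ℕ) (hd : 0 < d) (hp : 0 < p) (hj : 0 < j) (hpodd : Odd p)
    (r s b c : ℤ)
    (heq : r ^ 2 + s ^ 2 - b * c = (d : ℤ) * (p : ℤ) ^ (2 * j)) :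
    (Even d → chiFour (-2 * (r + s) + 2 * b + c) = chiFour c) ∧
      (Odd d → Odd c → chiFour (-2 * (r + s) + 2 * b + c) = -chiFour c) ∧
      (Even (-2 * (r + s) + 2 * b + c) ↔ Even c) := by
  obtain ⟨a, ha⟩ : (2:ℤ) ∣ r ^ 2 - r := by
    rcases Int.even_or_odd r with ⟨k, hk⟩ | ⟨k, hk⟩ <;> subst hk
    · exact ⟨2 * k ^ 2 - k, by ring⟩
    · exact ⟨2 * k ^ 2 + k, by ring⟩
  obtain ⟨e, he⟩ : (2:ℤ) ∣ s ^ 2 - s := by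
    rcases Int.even_or_odd s with ⟨k, hk⟩ | ⟨k, hk⟩ <;> subst hk
    · exact ⟨2 * k ^ 2 - k, by ring⟩
    · exact ⟨2 * k ^ 2 + k, by ring⟩
  obtain ⟨f, hf⟩ : (2:ℤ) ∣ (p:ℤ) ^ (2 * j) - 1 := by
    have hop : Odd ((p:ℤ) ^ (2 * j)) := ((Int.odd_coe_nat p).mpr hpodd).pow
    obtain ⟨t, ht⟩ := hop
    exact ⟨t, by omega⟩
  have key : r + s - b * c - (d:ℤ) = 2 * ((d:ℤ) * f - a - e) := by
    linear_combination heq - ha - he + (d:ℤ) * hf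
  rcases Int.even_or_odd c with ⟨k, hk⟩ | ⟨k, hk⟩
  · refine ⟨?_, ?_, ?_⟩
    · intro _
      unfold chiFour
      split_ifs <;> omega
    · intro _ hc
      obtain ⟨m, hm⟩ := hc
      omega
    · rw [Int.even_iff, Int.even_iff]
      omega
  · obtain ⟨t, ht⟩ : ∃ t, -2 * (r + s) + 2 * b + c = c - 2 * (d:ℤ) + 4 * t := by
      refine ⟨-((d:ℤ) * f - a - e) - b * k, ?_⟩
      have hbc : b * c = 2 * (b * k) + b := by rw [hk]; ring
      linarith [key]
    refine ⟨?_, ?_, ?_⟩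
    · intro hdeven
      obtain ⟨m, hm⟩ := hdeven
      unfold chiFour
      split_ifs <;> omega
    · intro hdodd _
      obtain ⟨m, hm⟩ := hdodd
      unfold chiFour
      split_ifs <;> omega
    · rw [Int.even_iff, Int.even_iff]
      omega
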